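/- (Theorem 1.) In the setting of the quantum relaxation of MaxCut, magic state rounding achieves an expected approximation ratio of at least 5/9: let G = (V, E) be a finite simple graph with E nonempty, with injective qubit assignment σ : V → Fin n × Fin 3 mapping adjacent vertices to distinct qubits, relaxed Hamiltonian H = Σ_{{u,v} ∈ E} (1/2)·(Id − 3·P_u·P_v), and let c* = max over m : V → {−1,1} of cut(m). Then for every positive-semidefinite n-qubit matrix ρ with trace 1 whose energy satisfies Re(tr(H·ρ)) ≥ c*, the expected rounded energy satisfies Re(tr(H · R(ρ))) ≥ (5/9)·c*. -/

import Mathlib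

open Matrix
open scoped Classical ComplexOrder

/-- The Pauli `X` matrix. -/
noncomputable def PX : Matrix (Fin 2) (Fin 2) ℂ := !![0, 1; 1, 0]

/-- The Pauli `Y` matrix. -/
noncomputable def PY : Matrix (Fin 2) (Fin 2) ℂ := !![0, -Complex.I; Complex.I, 0]

/-- The Pauli `Z` matrix. -/
noncomputable def PZ : Matrix (Fin 2) (Fin 2) ℂ := !![1, 0; 0, -1]

/-- The three non-identity Pauli matrices `q₁ = X, q₂ = Y, q₃ = Z` (slots indexed by `Fin 3`). -/
noncomputable def pauliXYZ : Fin 3 → Matrix (Fin 2) (Fin 2) ℂ := ![PX, PY, PZ]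

/-- The single-qubit magic state `μ_u` for `u ∈ {−1,1}³`. -/
noncomputable def magic (u : Fin 3 → ℝ) : Matrix (Fin 2) (Fin 2) ℂ :=
  (1 / 2 : ℂ) • ((1 : Matrix (Fin 2) (Fin 2) ℂ) +
    (1 / (Real.sqrt 3 : ℂ)) • ((u 0 : ℂ) • PX + (u 1 : ℂ) • PY + (u 2 : ℂ) • PZ))

/-- `±1`-valued sign of a Boolean, used to enumerate `{−1,1}³` by `Fin 3 → Bool`. -/
noncomputable def bsign (b : Bool) : ℝ := if b then 1 else -1

/-- The `n`-qubit tensor product of magic states `M_u` for `u : Fin n → {−1,1}³`. -/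
noncomputable def magicProd (n : ℕ) (u : Fin n → Fin 3 → Bool) :
    Matrix (Fin n → Fin 2) (Fin n → Fin 2) ℂ :=
  Matrix.of fun x y => ∏ q, magic (fun i => bsign (u q i)) (x q) (y q)

/-- The expected magic-state-rounding channel on `n` qubits:
`R(ρ) = (1/4ⁿ)·Σ_u tr(M_u·ρ)·M_u`. -/
noncomputable def roundCh (n : ℕ) (ρ : Matrix (Fin n → Fin 2) (Fin n → Fin 2) ℂ) :
    Matrix (Fin n → Fin 2) (Fin n → Fin 2) ℂ :=
  (1 / 4 ^ n : ℂ) • ∑ u : Fin n → Fin 3 → Bool, (magicProd n u * ρ).trace • magicProd n u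

/-- The vertex operator `P_v`: the weight-1 Pauli string acting as the Pauli matrix of slot
`(σ v).2` on qubit `(σ v).1` and as the identity on all other qubits. -/
noncomputable def vertexOp {V : Type*} (n : ℕ) (σ : V → Fin n × Fin 3) (v : V) :
    Matrix (Fin n → Fin 2) (Fin n → Fin 2) ℂ :=
  Matrix.of fun x y =>
    pauliXYZ (σ v).2 (x (σ v).1) (y (σ v).1) *
      ∏ q ∈ Finset.univ.erase (σ v).1, (if x q = y q then (1 : ℂ) else 0)

/-- The relaxed Hamiltonian `H = Σ_{{u,v} ∈ E} (1/2)·(Id − 3·P_u·P_v)`. -/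
noncomputable def relaxH {V : Type*} [Fintype V] [DecidableEq V] (n : ℕ)
    (σ : V → Fin n × Fin 3) (G : SimpleGraph V) [DecidableRel G.Adj] :
    Matrix (Fin n → Fin 2) (Fin n → Fin 2) ℂ :=
  ∑ e ∈ G.edgeFinset, (1 / 2 : ℂ) •
    ((1 : Matrix (Fin n → Fin 2) (Fin n → Fin 2) ℂ) -
      (3 : ℂ) • (vertexOp n σ e.out.1 * vertexOp n σ e.out.2))

/-- The cut value `cut(m) = Σ_{{u,v} ∈ E} (1/2)·(1 − m(u)·m(v))`. -/
noncomputable def cutVal {V : Type*} [Fintype V] [DecidableEq V]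
    (G : SimpleGraph V) [DecidableRel G.Adj] (m : V → ℝ) : ℝ :=
  ∑ e ∈ G.edgeFinset, (1 / 2 : ℝ) * (1 - m e.out.1 * m e.out.2)

section AuxMagic

/-! ### Auxiliary tensor-product machinery -/

noncomputable def tens {n : ℕ} (f : Fin n → Matrix (Fin 2) (Fin 2) ℂ) :
    Matrix (Fin n → Fin 2) (Fin n → Fin 2) ℂ :=
  Matrix.of fun x y => ∏ q, f q (x q) (y q)

lemma tens_mul {n : ℕ} (f g : Fin n → Matrix (Fin 2) (Fin 2) ℂ) :
    tens f * tens g = tens (fun q => f q * g q) := by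
  ext x y
  simp only [tens, Matrix.mul_apply, Matrix.of_apply]
  rw [Finset.prod_univ_sum, Fintype.piFinset_univ]
  apply Finset.sum_congr rfl
  intro z _
  rw [Finset.prod_mul_distrib]

lemma tens_trace {n : ℕ} (f : Fin n → Matrix (Fin 2) (Fin 2) ℂ) :
    (tens f).trace = ∏ q, (f q).trace := by
  simp only [Matrix.trace, Matrix.diag, tens, Matrix.of_apply]
  rw [Finset.prod_univ_sum, Fintype.piFinset_univ]

lemma tens_one {n : ℕ} : tens (fun _ : Fin n => (1 : Matrix (Fin 2) (Fin 2) ℂ)) = 1 := by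
  ext x y
  simp only [tens, Matrix.of_apply, Matrix.one_apply]
  rw [Finset.prod_boole]
  simp [funext_iff]

lemma tens_smul {n : ℕ} (c : Fin n → ℂ) (f : Fin n → Matrix (Fin 2) (Fin 2) ℂ) :
    tens (fun q => c q • f q) = (∏ q, c q) • tens f := by
  ext x y
  simp [tens, Finset.prod_mul_distrib]

lemma sum_tens {n : ℕ} {K : Type*} [Fintype K] [DecidableEq K]
    (F : Fin n → K → Matrix (Fin 2) (Fin 2) ℂ) :
    ∑ u : Fin n → K, tens (fun q => F q (u q)) = tens (fun q => ∑ k, F q k) := by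
  ext x y
  simp only [tens, Matrix.sum_apply, Matrix.of_apply]
  rw [Finset.prod_univ_sum, Fintype.piFinset_univ]

/-! ### Single-qubit computations -/

lemma magic_trace (f : Fin 3 → ℝ) : (magic f).trace = 1 := by
  simp [magic, PX, PY, PZ, Matrix.trace, Fin.sum_univ_two, Matrix.one_apply]
  ring

lemma tr_magic_pauli (f : Fin 3 → ℝ) (s : Fin 3) :
    (magic f * pauliXYZ s).trace = (f s : ℂ) / (Real.sqrt 3 : ℂ) := by
  have h3 : ((Real.sqrt 3 : ℝ) : ℂ) ≠ 0 := by
    simp [Complex.ofReal_ne_zero]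
    try positivity
  fin_cases s <;>
    · simp [magic, PX, PY, PZ, pauliXYZ, Matrix.trace, Fin.sum_univ_two, Matrix.mul_apply,
        Matrix.one_apply]
      try field_simp
      try ring_nf
      try simp [Complex.I_sq]
      try ring

lemma S1 (i : Fin 3) : ∑ v : Fin 3 → Bool, (bsign (v i) : ℂ) = 0 := by
  have h : ∀ b, (bsign b : ℂ) = ((if b then 1 else -1 : ℤ) : ℂ) := by
    intro b; cases b <;> simp [bsign]
  simp only [h]
  rw [← Int.cast_sum]
  norm_cast
  revert i; decide

lemma S2 (i j : Fin 3) :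
    ∑ v : Fin 3 → Bool, ((bsign (v i) : ℂ) * (bsign (v j) : ℂ)) =
      if i = j then 8 else 0 := by
  have h : ∀ b c, (bsign b : ℂ) * (bsign c : ℂ) =
      (((if b then 1 else -1) * (if c then 1 else -1) : ℤ) : ℂ) := by
    intro b c; cases b <;> cases c <;> simp [bsign]
  simp only [h]
  rw [← Int.cast_sum]
  have : (∑ v : Fin 3 → Bool, ((if v i then 1 else -1) * (if v j then 1 else -1) : ℤ))
      = if i = j then 8 else 0 := by revert i j; decide
  rw [this]
  split <;> norm_num

lemma coeff1 (i : Fin 3) :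
    ∑ v : Fin 3 → Bool, ((bsign (v i) : ℂ) / (2 * (Real.sqrt 3 : ℂ))) = 0 := by
  rw [← Finset.sum_div, S1, zero_div]

lemma sqrt3_sq : ((Real.sqrt 3 : ℝ) : ℂ) * ((Real.sqrt 3 : ℝ) : ℂ) = 3 := by
  norm_cast
  exact Real.mul_self_sqrt (by norm_num)

lemma key1 : ∑ v : Fin 3 → Bool, magic (fun i => bsign (v i)) =
    (4 : ℂ) • (1 : Matrix (Fin 2) (Fin 2) ℂ) := by
  have expand : ∀ v : Fin 3 → Bool, magic (fun i => bsign (v i)) =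
      (1 / 2 : ℂ) • (1 : Matrix (Fin 2) (Fin 2) ℂ)
      + ((bsign (v 0) : ℂ) / (2 * (Real.sqrt 3 : ℂ))) • PX
      + ((bsign (v 1) : ℂ) / (2 * (Real.sqrt 3 : ℂ))) • PY
      + ((bsign (v 2) : ℂ) / (2 * (Real.sqrt 3 : ℂ))) • PZ := by
    intro v
    simp only [magic, smul_add, smul_smul]
    match_scalars <;> · try field_simp; try ring; try simp
  simp only [expand, Finset.sum_add_distrib, ← Finset.sum_smul, coeff1,
    Finset.sum_const, Finset.card_univ]
  rw [show (Fintype.card (Fin 3 → Bool)) = 8 from by simp]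
  simp only [zero_smul, add_zero, smul_smul]
  norm_num

lemma key2 (s : Fin 3) :
    ∑ v : Fin 3 → Bool,
      (magic (fun i => bsign (v i)) * pauliXYZ s).trace • magic (fun i => bsign (v i)) =
      (4 / 3 : ℂ) • pauliXYZ s := by
  have coeff2 : ∀ j : Fin 3, ∑ v : Fin 3 → Bool,
      ((bsign (v s) : ℂ) * (bsign (v j) : ℂ) / (2 * (Real.sqrt 3 : ℂ) * (Real.sqrt 3 : ℂ))) =
      if s = j then (4 / 3 : ℂ) else 0 := by
    intro j
    rw [← Finset.sum_div, S2, mul_assoc, sqrt3_sq]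
    split <;> norm_num
  have expand : ∀ v : Fin 3 → Bool,
      (magic (fun i => bsign (v i)) * pauliXYZ s).trace • magic (fun i => bsign (v i)) =
      ((bsign (v s) : ℂ) / (2 * (Real.sqrt 3 : ℂ))) • (1 : Matrix (Fin 2) (Fin 2) ℂ)
      + ((bsign (v s) : ℂ) * (bsign (v 0) : ℂ) / (2 * (Real.sqrt 3 : ℂ) * (Real.sqrt 3 : ℂ))) • PX
      + ((bsign (v s) : ℂ) * (bsign (v 1) : ℂ) / (2 * (Real.sqrt 3 : ℂ) * (Real.sqrt 3 : ℂ))) • PY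
      + ((bsign (v s) : ℂ) * (bsign (v 2) : ℂ) / (2 * (Real.sqrt 3 : ℂ) * (Real.sqrt 3 : ℂ))) • PZ := by
    intro v
    rw [tr_magic_pauli]
    simp only [magic, smul_add, smul_smul]
    match_scalars <;> · try field_simp; try ring; try simp
  simp only [expand, Finset.sum_add_distrib, ← Finset.sum_smul, coeff1, coeff2]
  fin_cases s <;> simp [pauliXYZ]

end AuxMagic

set_option maxHeartbeats 1000000

section Aux2

lemma magicProd_eq_tens (n : ℕ) (u : Fin n → Fin 3 → Bool) :
    magicProd n u = tens (fun q => magic (fun i => bsign (u q i))) := rfl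

lemma vertexOp_eq_tens {V : Type*} (n : ℕ) (σ : V → Fin n × Fin 3) (v : V) :
    vertexOp n σ v = tens (fun q => if q = (σ v).1 then pauliXYZ (σ v).2 else 1) := by
  ext x y
  simp only [vertexOp, tens, Matrix.of_apply]
  rw [← Finset.mul_prod_erase _ _ (Finset.mem_univ (σ v).1)]
  congr 1
  · simp
  · apply Finset.prod_congr rfl
    intro q hq
    simp [Finset.ne_of_mem_erase hq, Matrix.one_apply]

lemma magicProd_trace (n : ℕ) (u : Fin n → Fin 3 → Bool) : (magicProd n u).trace = 1 := by
  rw [magicProd_eq_tens, tens_trace]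
  simp [magic_trace]

lemma sum_magicProd (n : ℕ) :
    ∑ u : Fin n → Fin 3 → Bool, magicProd n u = ((4 : ℂ) ^ n) • 1 := by
  calc ∑ u : Fin n → Fin 3 → Bool, magicProd n u
      = tens (fun _ : Fin n => ∑ v : Fin 3 → Bool, magic (fun i => bsign (v i))) :=
        sum_tens (n := n) (K := Fin 3 → Bool) (fun _ v => magic (fun i => bsign (v i)))
    _ = tens (fun _ : Fin n => (4 : ℂ) • (1 : Matrix (Fin 2) (Fin 2) ℂ)) :=
        congrArg tens (funext fun _ => key1)
    _ = ((4 : ℂ) ^ n) • 1 := by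
        refine (tens_smul (fun _ => (4 : ℂ)) (fun _ => 1)).trans ?_
        rw [tens_one, Finset.prod_const, Finset.card_univ, Fintype.card_fin]

lemma sum_magicProd_smul {V : Type*} (n : ℕ) (σ : V → Fin n × Fin 3) (a b : V)
    (hab : (σ a).1 ≠ (σ b).1) :
    ∑ u : Fin n → Fin 3 → Bool,
      (magicProd n u * (vertexOp n σ a * vertexOp n σ b)).trace • magicProd n u =
    (((4 : ℂ) ^ n) / 9) • (vertexOp n σ a * vertexOp n σ b) := by
  set fa : Fin n → Matrix (Fin 2) (Fin 2) ℂ :=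
    fun q => if q = (σ a).1 then pauliXYZ (σ a).2 else 1 with hfa
  set fb : Fin n → Matrix (Fin 2) (Fin 2) ℂ :=
    fun q => if q = (σ b).1 then pauliXYZ (σ b).2 else 1 with hfb
  have hA : vertexOp n σ a * vertexOp n σ b = tens (fun q => fa q * fb q) := by
    rw [vertexOp_eq_tens, vertexOp_eq_tens, tens_mul]
  rw [hA]
  have step1 : ∀ u : Fin n → Fin 3 → Bool,
      (magicProd n u * tens (fun q => fa q * fb q)).trace • magicProd n u =
      tens (fun q => (magic (fun i => bsign (u q i)) * (fa q * fb q)).trace •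
        magic (fun i => bsign (u q i))) := by
    intro u
    rw [magicProd_eq_tens, tens_mul, tens_trace, tens_smul]
  simp only [step1]
  have slot : ∀ q : Fin n,
      (∑ v : Fin 3 → Bool, (magic (fun i => bsign (v i)) * (fa q * fb q)).trace •
        magic (fun i => bsign (v i))) =
      ((4 : ℂ) * (if q = (σ a).1 then 1/3 else 1) * (if q = (σ b).1 then 1/3 else 1)) •
        (fa q * fb q) := by
    intro q
    rcases eq_or_ne q (σ a).1 with h1 | h1
    · subst h1
      simp only [hfa, hfb, eq_self_iff_true, if_true, if_neg hab, mul_one]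
      rw [key2]
      norm_num
    · rcases eq_or_ne q (σ b).1 with h2 | h2
      · subst h2
        simp only [hfa, hfb, eq_self_iff_true, if_true, if_neg (Ne.symm hab), one_mul]
        rw [key2]
        try norm_num
      · simp only [hfa, hfb, if_neg h1, if_neg h2, mul_one]
        simp only [mul_one, magic_trace, one_smul]
        rw [key1]
        try norm_num
  calc ∑ u : Fin n → Fin 3 → Bool, tens (fun q =>
        (magic (fun i => bsign (u q i)) * (fa q * fb q)).trace • magic (fun i => bsign (u q i)))
      = tens (fun q => ∑ v : Fin 3 → Bool,
          (magic (fun i => bsign (v i)) * (fa q * fb q)).trace • magic (fun i => bsign (v i))) :=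
        sum_tens (n := n) (K := Fin 3 → Bool)
          (fun q v => (magic (fun i => bsign (v i)) * (fa q * fb q)).trace •
            magic (fun i => bsign (v i)))
    _ = tens (fun q => ((4 : ℂ) * (if q = (σ a).1 then 1/3 else 1) *
          (if q = (σ b).1 then 1/3 else 1)) • (fa q * fb q)) :=
        congrArg tens (funext fun q => slot q)
    _ = (∏ q : Fin n, (4 : ℂ) * (if q = (σ a).1 then 1/3 else 1) *
          (if q = (σ b).1 then 1/3 else 1)) • tens (fun q => fa q * fb q) :=
        tens_smul _ _
    _ = (((4 : ℂ) ^ n) / 9) • tens (fun q => fa q * fb q) := by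
        congr 1
        rw [Finset.prod_mul_distrib, Finset.prod_mul_distrib, Finset.prod_const]
        rw [Finset.prod_ite_eq' Finset.univ (σ a).1 (fun _ => (1/3 : ℂ)),
          Finset.prod_ite_eq' Finset.univ (σ b).1 (fun _ => (1/3 : ℂ))]
        simp
        try ring

lemma trace_roundCh (n : ℕ) (ρ : Matrix (Fin n → Fin 2) (Fin n → Fin 2) ℂ) :
    (roundCh n ρ).trace = ρ.trace := by
  have h4 : ((4 : ℂ) ^ n) ≠ 0 := by positivity
  rw [roundCh, Matrix.trace_smul, Matrix.trace_sum]
  simp only [Matrix.trace_smul, magicProd_trace, smul_eq_mul, mul_one]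
  have : ∑ u : Fin n → Fin 3 → Bool, (magicProd n u * ρ).trace =
      ((4:ℂ)^n) * ρ.trace := by
    rw [← Matrix.trace_sum]
    rw [show (∑ u : Fin n → Fin 3 → Bool, (magicProd n u * ρ)) =
      (∑ u : Fin n → Fin 3 → Bool, magicProd n u) * ρ from (Finset.sum_mul _ _ _).symm]
    rw [sum_magicProd]
    rw [Matrix.smul_mul, Matrix.trace_smul, Matrix.one_mul]
    simp
  rw [this]
  field_simp

lemma trace_pair_roundCh {V : Type*} (n : ℕ) (σ : V → Fin n × Fin 3) (a b : V)
    (hab : (σ a).1 ≠ (σ b).1) (ρ : Matrix (Fin n → Fin 2) (Fin n → Fin 2) ℂ) :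
    ((vertexOp n σ a * vertexOp n σ b) * roundCh n ρ).trace =
      (1/9 : ℂ) * ((vertexOp n σ a * vertexOp n σ b) * ρ).trace := by
  have h4 : ((4 : ℂ) ^ n) ≠ 0 := by positivity
  set A := vertexOp n σ a * vertexOp n σ b with hA
  have key := congrArg (fun M => (M * ρ).trace) (sum_magicProd_smul n σ a b hab)
  simp only [Finset.sum_mul, Matrix.smul_mul, Matrix.trace_sum, Matrix.trace_smul,
    smul_eq_mul] at key
  -- key : ∑ u, (M_u * A).trace * (M_u * ρ).trace = (4^n/9) * (A*ρ).trace
  rw [roundCh, Matrix.mul_smul, Matrix.trace_smul]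
  simp only [Matrix.mul_sum, Matrix.mul_smul, Matrix.trace_sum, Matrix.trace_smul, smul_eq_mul]
  have comm : ∀ u, (A * magicProd n u).trace = (magicProd n u * A).trace := fun u =>
    Matrix.trace_mul_comm _ _
  calc (1/4^n : ℂ) • ∑ u : Fin n → Fin 3 → Bool,
        (magicProd n u * ρ).trace * (A * magicProd n u).trace
      = (1/4^n : ℂ) * ∑ u : Fin n → Fin 3 → Bool,
        (magicProd n u * A).trace * (magicProd n u * ρ).trace := by
        rw [smul_eq_mul]; congr 1; exact Finset.sum_congr rfl fun u _ => by
          rw [comm u, mul_comm]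
    _ = (1/4^n : ℂ) * ((((4:ℂ)^n)/9) * (A * ρ).trace) := by rw [key]
    _ = (1/9 : ℂ) * (A * ρ).trace := by field_simp; try ring

end Aux2

section Aux3

lemma adj_out {V : Type*} [Fintype V] [DecidableEq V]
    (G : SimpleGraph V) [DecidableRel G.Adj] {e : Sym2 V} (he : e ∈ G.edgeFinset) :
    G.Adj e.out.1 e.out.2 := by
  rw [SimpleGraph.mem_edgeFinset] at he
  rw [← SimpleGraph.mem_edgeSet]
  have : s(e.out.1, e.out.2) = e := by
    change Quot.mk _ (Quot.out e) = e
    exact Quot.out_eq e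
  rwa [this]

lemma trace_relaxH_mul {V : Type*} [Fintype V] [DecidableEq V] (n : ℕ)
    (σ : V → Fin n × Fin 3) (G : SimpleGraph V) [DecidableRel G.Adj]
    (ρ : Matrix (Fin n → Fin 2) (Fin n → Fin 2) ℂ) :
    (relaxH n σ G * ρ).trace = ∑ e ∈ G.edgeFinset, (1/2 : ℂ) *
      (ρ.trace - 3 * ((vertexOp n σ e.out.1 * vertexOp n σ e.out.2) * ρ).trace) := by
  rw [relaxH, Finset.sum_mul, Matrix.trace_sum]
  apply Finset.sum_congr rfl
  intro e _
  rw [Matrix.smul_mul, Matrix.sub_mul, Matrix.smul_mul, Matrix.one_mul,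
    Matrix.trace_smul, Matrix.trace_sub, Matrix.trace_smul]
  simp [smul_eq_mul]

lemma cutVal_le_card {V : Type*} [Fintype V] [DecidableEq V]
    (G : SimpleGraph V) [DecidableRel G.Adj] (m : V → ℝ)
    (hm : ∀ v, m v = 1 ∨ m v = -1) : cutVal G m ≤ (G.edgeFinset.card : ℝ) := by
  rw [cutVal]
  calc ∑ e ∈ G.edgeFinset, (1 / 2 : ℝ) * (1 - m e.out.1 * m e.out.2)
      ≤ ∑ e ∈ G.edgeFinset, (1 : ℝ) := by
        apply Finset.sum_le_sum
        intro e _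
        rcases hm e.out.1 with h1 | h1 <;> rcases hm e.out.2 with h2 | h2 <;>
          rw [h1, h2] <;> norm_num
    _ = (G.edgeFinset.card : ℝ) := by simp

end Aux3

theorem magic_rounding_approximation_ratio
    {V : Type*} [Fintype V] [DecidableEq V] (n : ℕ)
    (G : SimpleGraph V) [DecidableRel G.Adj] (hE : G.edgeFinset.Nonempty)
    (σ : V → Fin n × Fin 3) (hσ : Function.Injective σ)
    (hadj : ∀ u v : V, G.Adj u v → (σ u).1 ≠ (σ v).1)
    (cstar : ℝ)
    (hmax : ∃ m : V → ℝ, (∀ v, m v = 1 ∨ m v = -1) ∧ cutVal G m = cstar)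
    (hub : ∀ m : V → ℝ, (∀ v, m v = 1 ∨ m v = -1) → cutVal G m ≤ cstar)
    (ρ : Matrix (Fin n → Fin 2) (Fin n → Fin 2) ℂ)
    (hρ : ρ.PosSemidef) (hρ1 : ρ.trace = 1)
    (henergy : cstar ≤ Complex.re ((relaxH n σ G * ρ).trace)) :
    (5 / 9 : ℝ) * cstar ≤ Complex.re ((relaxH n σ G * roundCh n ρ).trace) := by
  obtain ⟨m, hm, hmcut⟩ := hmax
  have hCE : cstar ≤ (G.edgeFinset.card : ℝ) := hmcut ▸ cutVal_le_card G m hm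
  have hRtr : (roundCh n ρ).trace = 1 := by rw [trace_roundCh, hρ1]
  set t : Sym2 V → ℂ :=
    fun e => ((vertexOp n σ e.out.1 * vertexOp n σ e.out.2) * ρ).trace with ht
  have h1 : Complex.re ((relaxH n σ G * ρ).trace)
      = ∑ e ∈ G.edgeFinset, (1/2 : ℝ) * (1 - 3 * (t e).re) := by
    rw [trace_relaxH_mul, hρ1, Complex.re_sum]
    apply Finset.sum_congr rfl
    intro e _
    simp [Complex.mul_re, Complex.sub_re, Complex.mul_im]
    try ring
  have h2 : Complex.re ((relaxH n σ G * roundCh n ρ).trace)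
      = ∑ e ∈ G.edgeFinset, (1/2 : ℝ) * (1 - (1/3) * (t e).re) := by
    rw [trace_relaxH_mul, hRtr, Complex.re_sum]
    apply Finset.sum_congr rfl
    intro e he
    rw [trace_pair_roundCh n σ _ _ (hadj _ _ (adj_out G he)) ρ]
    simp [Complex.mul_re, Complex.sub_re, Complex.mul_im]
    try ring
  set S : ℝ := ∑ e ∈ G.edgeFinset, (t e).re with hS
  have e1 : ∑ e ∈ G.edgeFinset, (1/2 : ℝ) * (1 - 3 * (t e).re)
      = (G.edgeFinset.card : ℝ) / 2 - (3/2) * S := by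
    rw [hS, Finset.mul_sum]
    rw [show (∑ e ∈ G.edgeFinset, (1/2 : ℝ) * (1 - 3 * (t e).re))
        = ∑ e ∈ G.edgeFinset, ((1/2 : ℝ) - (3/2) * (t e).re) from
      Finset.sum_congr rfl fun e _ => by ring]
    rw [Finset.sum_sub_distrib, Finset.sum_const]
    simp
    try ring
  have e2 : ∑ e ∈ G.edgeFinset, (1/2 : ℝ) * (1 - (1/3) * (t e).re)
      = (G.edgeFinset.card : ℝ) / 2 - (1/6) * S := by
    rw [hS, Finset.mul_sum]
    rw [show (∑ e ∈ G.edgeFinset, (1/2 : ℝ) * (1 - (1/3) * (t e).re))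
        = ∑ e ∈ G.edgeFinset, ((1/2 : ℝ) - (1/6) * (t e).re) from
      Finset.sum_congr rfl fun e _ => by ring]
    rw [Finset.sum_sub_distrib, Finset.sum_const]
    simp
    try ring
  rw [h2, e2]
  rw [h1, e1] at henergy
  linarith
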